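/- Let 0 < a < 1 and define P(z, w) = −2 − 2a² − a/w − a·w − a/z − a·z for nonzero complex z, w. Then P(z, w) ≠ 0 for all z, w ∈ ℂ with |z| = |w| = 1. -/

import Mathlib

theorem stmt6 (a : ℝ) (ha0 : 0 < a) (ha1 : a < 1) (z w : ℂ)
    (hz : ‖z‖ = 1) (hw : ‖w‖ = 1) :
    (-2 - 2*(a:ℂ)^2 - (a:ℂ)/w - (a:ℂ)*w - (a:ℂ)/z - (a:ℂ)*z) ≠ 0 := by
  have hzc : z⁻¹ = starRingEnd ℂ z := Complex.inv_eq_conj hz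
  have hwc : w⁻¹ = starRingEnd ℂ w := Complex.inv_eq_conj hw
  have hsum : (-2 - 2*(a:ℂ)^2 - (a:ℂ)/w - (a:ℂ)*w - (a:ℂ)/z - (a:ℂ)*z)
      = ((-2 - 2*a^2 - a*(2*w.re) - a*(2*z.re) : ℝ) : ℂ) := by
    have hz2 : z + starRingEnd ℂ z = 2*(z.re:ℂ) := by
      rw [Complex.add_conj]; push_cast; ring
    have hw2 : w + starRingEnd ℂ w = 2*(w.re:ℂ) := by
      rw [Complex.add_conj]; push_cast; ring
    rw [div_eq_mul_inv, div_eq_mul_inv, hzc, hwc]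
    push_cast
    linear_combination -(a:ℂ)*hz2 - (a:ℂ)*hw2
  rw [hsum]
  rw [Ne, Complex.ofReal_eq_zero]
  have hzre : -1 ≤ z.re :=
    (abs_le.mp (hz ▸ Complex.abs_re_le_norm z)).1
  have hwre : -1 ≤ w.re :=
    (abs_le.mp (hw ▸ Complex.abs_re_le_norm w)).1
  nlinarith [sq_nonneg (1 - a)]
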